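/- Let A be an m × n matrix over the complex numbers. If A is a (q,k,t)-design matrix, then rank(A) ≥ n / (1 + q(q−1)t/k), and consequently rank(A) ≥ n − ntq(q−1)/k. -/

import Mathlib

/-- An `m × n` matrix `A` over a field is a `(q,k,t)`-design matrix if every row has
support of size at most `q`, every column has support of size at least `k`, and the
supports of any two distinct columns intersect in at most `t` coordinates. -/
def IsDesignMatrix {F : Type*} [Field F] {m n : ℕ}
    (A : Matrix (Fin m) (Fin n) F) (q k t : ℕ) : Prop :=
  (∀ i : Fin m, {j : Fin n | A i j ≠ 0}.ncard ≤ q) ∧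
  (∀ j : Fin n, k ≤ {i : Fin m | A i j ≠ 0}.ncard) ∧
  (∀ j₁ j₂ : Fin n, j₁ ≠ j₂ →
    ({i : Fin m | A i j₁ ≠ 0} ∩ {i : Fin m | A i j₂ ≠ 0}).ncard ≤ t)


open Finset Real Matrix


lemma herm_trace_eq {n : ℕ} (N : Matrix (Fin n) (Fin n) ℂ) (hN : N.IsHermitian) :
    N.trace = ∑ i, (hN.eigenvalues i : ℂ) := by
  conv_lhs => rw [hN.spectral_theorem, Unitary.conjStarAlgAut_apply]
  rw [Matrix.trace_mul_cycle]
  have h1 : (star (hN.eigenvectorUnitary : Matrix (Fin n) (Fin n) ℂ)) *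
      (hN.eigenvectorUnitary : Matrix (Fin n) (Fin n) ℂ) = 1 :=
    Matrix.mem_unitaryGroup_iff'.mp hN.eigenvectorUnitary.2
  rw [h1, Matrix.one_mul, Matrix.trace_diagonal]
  rfl

lemma herm_sq_trace_eq {n : ℕ} (N : Matrix (Fin n) (Fin n) ℂ) (hN : N.IsHermitian) :
    (N * N).trace = ∑ i, ((hN.eigenvalues i : ℂ))^2 := by
  have hspec := hN.spectral_theorem
  have h1 : (star (hN.eigenvectorUnitary : Matrix (Fin n) (Fin n) ℂ)) *
      (hN.eigenvectorUnitary : Matrix (Fin n) (Fin n) ℂ) = 1 :=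
    Matrix.mem_unitaryGroup_iff'.mp hN.eigenvectorUnitary.2
  set U : Matrix (Fin n) (Fin n) ℂ := (hN.eigenvectorUnitary : Matrix (Fin n) (Fin n) ℂ) with hU
  set D : Matrix (Fin n) (Fin n) ℂ := Matrix.diagonal ((RCLike.ofReal ∘ hN.eigenvalues)) with hD
  have h2 : N * N = U * (D * ((star U * U) * D)) * star U := by
    rw [hspec, Unitary.conjStarAlgAut_apply]; simp only [Matrix.mul_assoc]; rfl
  rw [h1, Matrix.one_mul] at h2
  rw [h2, Matrix.trace_mul_cycle, h1, Matrix.one_mul, hD,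
    Matrix.diagonal_mul_diagonal, Matrix.trace_diagonal]
  simp [sq]

lemma rank_lemma_eigs {n : ℕ} (N : Matrix (Fin n) (Fin n) ℂ) (hN : N.IsHermitian) :
    (∑ i, hN.eigenvalues i)^2 ≤ (N.rank : ℝ) * ∑ i, (hN.eigenvalues i)^2 := by
  classical
  set S : Finset (Fin n) := Finset.univ.filter (fun i => hN.eigenvalues i ≠ 0) with hS
  have hsum : ∑ i, hN.eigenvalues i = ∑ i ∈ S, hN.eigenvalues i := by
    exact (Finset.sum_filter_ne_zero _).symm
  have hrank : (N.rank : ℝ) = (S.card : ℝ) := by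
    rw [hN.rank_eq_card_non_zero_eigs]
    norm_cast
    rw [hS, Fintype.card_subtype]
  have hcs := Finset.sum_mul_sq_le_sq_mul_sq S (fun _ => (1:ℝ)) (fun i => hN.eigenvalues i)
  simp only [one_mul, one_pow, Finset.sum_const, nsmul_eq_mul, mul_one] at hcs
  calc (∑ i, hN.eigenvalues i)^2 = (∑ i ∈ S, hN.eigenvalues i)^2 := by rw [hsum]
    _ ≤ (S.card : ℝ) * ∑ i ∈ S, (hN.eigenvalues i)^2 := hcs
    _ ≤ (N.rank : ℝ) * ∑ i, (hN.eigenvalues i)^2 := by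
        rw [hrank]
        exact mul_le_mul_of_nonneg_left (Finset.sum_le_sum_of_subset_of_nonneg
          (Finset.filter_subset _ _) (fun i _ _ => sq_nonneg _)) (Nat.cast_nonneg _)


lemma scaling_lemma {m n : ℕ} (P R : Fin m → Fin n → ℝ)
    (hP : ∀ i j, 0 ≤ P i j) (hR0 : ∀ i j, 0 ≤ R i j)
    (hRP : ∀ i j, R i j ≠ 0 → 0 < P i j)
    (hRcol : ∀ j, ∑ i, R i j = 1) {δ : ℝ} (hδ : 0 < δ) :
    ∃ u : Fin m → ℝ,
      ∀ i, ∑ j, Real.exp (u i) * P i j / (∑ i', Real.exp (u i') * P i' j)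
        ≤ (∑ j, R i j) + δ := by
  classical
  set cs : (Fin m → ℝ) → Fin n → ℝ := fun u j => ∑ i, Real.exp (u i) * P i j with hcs
  have hcs_pos : ∀ u j, 0 < cs u j := by
    intro u j
    obtain ⟨i, -, hi⟩ := Finset.exists_ne_zero_of_sum_ne_zero (by rw [hRcol j]; norm_num :
      (∑ i, R i j) ≠ 0)
    exact Finset.sum_pos' (fun i' _ => mul_nonneg (Real.exp_pos _).le (hP i' j))
      ⟨i, Finset.mem_univ i, mul_pos (Real.exp_pos _) (hRP i j hi)⟩
  set s : Fin m → ℝ := fun i => ∑ j, R i j with hs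
  set G : (Fin m → ℝ) → ℝ := fun u => (∑ i, s i * u i) - (∑ j, Real.log (cs u j)) with hG
  set C₀ : ℝ := ∑ j, ∑ i, -(R i j * Real.log (P i j / R i j)) with hC₀
  -- Jensen upper bound
  have hcol : ∀ (u : Fin m → ℝ) (j : Fin n),
      ∑ i, R i j * (u i + Real.log (P i j / R i j)) ≤ Real.log (cs u j) := by
    intro u j
    set z : Fin m → ℝ := fun i => if R i j = 0 then 1 else Real.exp (u i) * P i j / R i j with hz
    have hz_pos : ∀ i, 0 < z i := by
      intro i
      by_cases h : R i j = 0
      · simp [hz, h]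
      · simp only [hz, h, if_false]
        exact div_pos (mul_pos (Real.exp_pos _) (hRP i j h)) (lt_of_le_of_ne (hR0 i j) (Ne.symm h))
    have hAMGM := Real.geom_mean_le_arith_mean_weighted Finset.univ (fun i => R i j) z
      (fun i _ => hR0 i j) (hRcol j) (fun i _ => (hz_pos i).le)
    have hprod_pos : 0 < ∏ i, z i ^ (R i j) :=
      Finset.prod_pos fun i _ => Real.rpow_pos_of_pos (hz_pos i) _
    have hwz : ∑ i, R i j * z i ≤ cs u j := by
      refine Finset.sum_le_sum fun i _ => ?_
      by_cases h : R i j = 0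
      · rw [h, zero_mul]
        exact mul_nonneg (Real.exp_pos _).le (hP i j)
      · simp only [hz, h, if_false]
        rw [mul_div_cancel₀]
        exact h
    have hlogprod : Real.log (∏ i, z i ^ (R i j)) =
        ∑ i, R i j * (u i + Real.log (P i j / R i j)) := by
      rw [Real.log_prod (fun i _ => ne_of_gt (Real.rpow_pos_of_pos (hz_pos i) _))]
      refine Finset.sum_congr rfl fun i _ => ?_
      rw [Real.log_rpow (hz_pos i)]
      by_cases h : R i j = 0
      · simp [h]
      · simp only [hz, h, if_false]
        rw [mul_div_assoc, Real.log_mul (Real.exp_ne_zero _)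
          (ne_of_gt (div_pos (hRP i j h) (lt_of_le_of_ne (hR0 i j) (Ne.symm h)))), Real.log_exp]
    rw [← hlogprod]
    exact Real.log_le_log hprod_pos (le_trans hAMGM hwz)
  have hGle : ∀ u, G u ≤ C₀ := by
    intro u
    have h1 : ∑ j, (∑ i, R i j * (u i + Real.log (P i j / R i j))) ≤ ∑ j, Real.log (cs u j) :=
      Finset.sum_le_sum fun j _ => hcol u j
    have h2 : ∑ j, (∑ i, R i j * (u i + Real.log (P i j / R i j)))
        = (∑ i, s i * u i) - C₀ := by
      have hswap : ∀ (f : Fin m → Fin n → ℝ), ∑ j, ∑ i, f i j = ∑ i, ∑ j, f i j :=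
        fun f => Finset.sum_comm
      rw [hC₀, hswap, hswap, ← Finset.sum_sub_distrib]
      refine Finset.sum_congr rfl fun i _ => ?_
      have hsi : s i = ∑ j, R i j := rfl
      rw [hsi, Finset.sum_mul, ← Finset.sum_sub_distrib]
      refine Finset.sum_congr rfl fun j _ => ?_
      ring
    have hGu : G u = (∑ i, s i * u i) - (∑ j, Real.log (cs u j)) := rfl
    rw [hGu]
    linarith [h1, h2.symm ▸ h1]
  -- Part 2: existence of a maximizer of the penalized functional
  set L0 : ℝ := G 0 with hL0
  set E : ℝ := C₀ - L0 with hE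
  have hE0 : (0:ℝ) ≤ E := sub_nonneg.mpr (hGle 0)
  have hE1 : (0:ℝ) < E + 1 := by linarith
  set ε : ℝ := δ^2 / (4 * (E + 1)) with hεdef
  have hε : 0 < ε := div_pos (pow_pos hδ 2) (by linarith)
  set F : (Fin m → ℝ) → ℝ := fun u => G u - ε * ∑ i, (u i)^2 with hF
  have hF0 : F 0 = L0 := by
    have : F 0 = G 0 - ε * ∑ i : Fin m, ((0:Fin m → ℝ) i)^2 := rfl
    simp only [this, Pi.zero_apply]
    simp [hL0]
  have hFle : ∀ u, F u ≤ C₀ - ε * ∑ i, (u i)^2 := by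
    intro u
    have h1 := hGle u
    have h2 : F u = G u - ε * ∑ i, (u i)^2 := rfl
    linarith
  have hFcont : Continuous F := by
    have hc1 : Continuous (fun u : Fin m → ℝ => ∑ i, s i * u i) :=
      continuous_finset_sum _ (fun i _ => continuous_const.mul (continuous_apply i))
    have hc2 : Continuous (fun u : Fin m → ℝ => ∑ j, Real.log (cs u j)) := by
      refine continuous_finset_sum _ (fun j _ => Continuous.log ?_ (fun u => (hcs_pos u j).ne'))
      exact continuous_finset_sum _
        (fun i _ => (Real.continuous_exp.comp (continuous_apply i)).mul continuous_const)
    have hc3 : Continuous (fun u : Fin m → ℝ => ε * ∑ i, (u i)^2) :=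
      continuous_const.mul (continuous_finset_sum _ (fun i _ => (continuous_apply i).pow 2))
    exact (hc1.sub hc2).sub hc3
  set B : ℝ := Real.sqrt (E / ε) with hB
  set K : Set (Fin m → ℝ) := {u | F 0 ≤ F u} with hK
  have hKsub : K ⊆ Set.Icc (fun _ => -B) (fun _ => B) := by
    intro u hu
    have h3 : F 0 ≤ F u := hu
    rw [hF0] at h3
    have h2 := hFle u
    have h1 : ε * ∑ i, (u i)^2 ≤ E := by rw [hE]; linarith
    have habs : ∀ i, |u i| ≤ B := by
      intro i
      have h4 : (u i)^2 ≤ ∑ i', (u i')^2 :=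
        Finset.single_le_sum (fun i' _ => sq_nonneg (u i')) (Finset.mem_univ i)
      have h5 : (u i)^2 ≤ E / ε := by
        rw [le_div_iff₀ hε, mul_comm]
        calc ε * (u i)^2 ≤ ε * ∑ i', (u i')^2 := by
              exact mul_le_mul_of_nonneg_left h4 hε.le
          _ ≤ E := h1
      rw [hB, ← Real.sqrt_sq_eq_abs]
      exact Real.sqrt_le_sqrt h5
    constructor
    · intro i
      exact (abs_le.mp (habs i)).1
    · intro i
      exact (abs_le.mp (habs i)).2
  have hKclosed : IsClosed K := isClosed_le continuous_const hFcont
  have hKcpt : IsCompact K := IsCompact.of_isClosed_subset isCompact_Icc hKclosed hKsub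
  have hKne : K.Nonempty := ⟨0, by simp only [hK, Set.mem_setOf_eq]; exact le_refl _⟩
  obtain ⟨w, hwK, hwmax⟩ := hKcpt.exists_isMaxOn hKne hFcont.continuousOn
  have hglob : ∀ u, F u ≤ F w := by
    intro u
    by_cases hu : u ∈ K
    · exact hwmax hu
    · exact (not_le.mp hu).le.trans (hwK : F 0 ≤ F w)
  -- Part 3: stationarity at the maximizer
  refine ⟨w, fun i => ?_⟩
  set a : Fin n → ℝ := fun j => ∑ i' ∈ Finset.univ.erase i, Real.exp (w i') * P i' j with ha
  have hsplit : ∀ (v : ℝ) (j : Fin n), cs (Function.update w i v) j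
      = Real.exp v * P i j + a j := by
    intro v j
    have : cs (Function.update w i v) j
        = ∑ i', Real.exp (Function.update w i v i') * P i' j := rfl
    rw [this, ← Finset.add_sum_erase Finset.univ _ (Finset.mem_univ i),
      Function.update_self]
    congr 1
    refine Finset.sum_congr rfl fun i' hi' => ?_
    rw [Function.update_of_ne (Finset.ne_of_mem_erase hi')]
  set ψ : ℝ → ℝ := fun v => s i * v - (∑ j, Real.log (Real.exp v * P i j + a j)) - ε * v^2
    with hψ
  set Cc : ℝ := (∑ i' ∈ Finset.univ.erase i, s i' * w i')
      - ε * (∑ i' ∈ Finset.univ.erase i, (w i')^2) with hCc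
  have hFupd : ∀ v, F (Function.update w i v) = ψ v + Cc := by
    intro v
    have e1 : ∑ i', s i' * Function.update w i v i'
        = s i * v + ∑ i' ∈ Finset.univ.erase i, s i' * w i' := by
      rw [← Finset.add_sum_erase Finset.univ _ (Finset.mem_univ i), Function.update_self]
      congr 1
      exact Finset.sum_congr rfl fun i' hi' => by
        rw [Function.update_of_ne (Finset.ne_of_mem_erase hi')]
    have e2 : ∑ i', (Function.update w i v i')^2
        = v^2 + ∑ i' ∈ Finset.univ.erase i, (w i')^2 := by
      rw [← Finset.add_sum_erase Finset.univ _ (Finset.mem_univ i), Function.update_self]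
      congr 1
      exact Finset.sum_congr rfl fun i' hi' => by
        rw [Function.update_of_ne (Finset.ne_of_mem_erase hi')]
    have e3 : ∑ j, Real.log (cs (Function.update w i v) j)
        = ∑ j, Real.log (Real.exp v * P i j + a j) :=
      Finset.sum_congr rfl fun j _ => by rw [hsplit]
    have e4 : F (Function.update w i v) = (∑ i', s i' * Function.update w i v i')
        - (∑ j, Real.log (cs (Function.update w i v) j))
        - ε * ∑ i', (Function.update w i v i')^2 := rfl
    rw [e4, e1, e2, e3, hψ, hCc]
    ring
  have hψmax : IsLocalMax ψ (w i) := by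
    apply Filter.Eventually.of_forall
    intro v
    have h1 := hglob (Function.update w i v)
    rw [hFupd v] at h1
    have h2 := hFupd (w i)
    rw [Function.update_eq_self] at h2
    rw [h2] at h1
    exact le_of_add_le_add_right h1
  have hden : ∀ j, Real.exp (w i) * P i j + a j = cs w j := by
    intro j
    have := hsplit (w i) j
    rw [Function.update_eq_self] at this
    exact this.symm
  have hpos : ∀ j, 0 < Real.exp (w i) * P i j + a j := by
    intro j; rw [hden j]; exact hcs_pos w j
  have hd1 : HasDerivAt (fun v => s i * v) (s i) (w i) := by
    simpa using (hasDerivAt_id (w i)).const_mul (s i)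
  have hd3 : HasDerivAt (fun v => ∑ j, Real.log (Real.exp v * P i j + a j))
      (∑ j, Real.exp (w i) * P i j / (Real.exp (w i) * P i j + a j)) (w i) :=
    HasDerivAt.fun_sum (fun j _ =>
      (((Real.hasDerivAt_exp (w i)).mul_const (P i j)).add_const (a j)).log (hpos j).ne')
  have hd4 : HasDerivAt (fun v => ε * v^2) (ε * (2 * w i)) (w i) := by
    simpa using (hasDerivAt_pow 2 (w i)).const_mul ε
  have hdψ : HasDerivAt ψ
      (s i - (∑ j, Real.exp (w i) * P i j / (Real.exp (w i) * P i j + a j))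
        - ε * (2 * w i)) (w i) := (hd1.sub hd3).sub hd4
  have hstat := hψmax.hasDerivAt_eq_zero hdψ
  simp only [hden] at hstat
  -- Conclude
  have hwi : |w i| ≤ B := by
    have hmem := hKsub hwK
    exact abs_le.mpr ⟨hmem.1 i, hmem.2 i⟩
  have hfinal : ∑ j, Real.exp (w i) * P i j / cs w j = s i - ε * (2 * w i) := by
    linarith
  have hεB : ε * B = Real.sqrt (ε * E) := by
    rw [hB, ← Real.sqrt_sq hε.le, ← Real.sqrt_mul (by positivity : (0:ℝ) ≤ ε^2)]
    congr 1
    field_simp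
    rw [Real.sqrt_sq hε.le]
    ring
  have key2 : ε * E = δ^2/4 - ε := by
    rw [hεdef]
    field_simp
    ring
  have h4εE : 4 * (ε * E) ≤ δ^2 := by
    rw [key2]; linarith
  have hsq2 : 2 * Real.sqrt (ε * E) ≤ δ := by
    have : 2 * Real.sqrt (ε * E) = Real.sqrt (4 * (ε * E)) := by
      rw [show (4:ℝ) * (ε * E) = 2^2 * (ε * E) by ring,
        Real.sqrt_mul (by norm_num : (0:ℝ) ≤ 2^2), Real.sqrt_sq (by norm_num : (0:ℝ) ≤ 2)]
    rw [this, ← Real.sqrt_sq hδ.le]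
    exact Real.sqrt_le_sqrt h4εE
  have h1 : ε * |w i| ≤ Real.sqrt (ε * E) := by
    calc ε * |w i| ≤ ε * B := mul_le_mul_of_nonneg_left hwi hε.le
      _ = Real.sqrt (ε * E) := hεB
  have h2 : -(ε * (2 * w i)) ≤ δ := by
    have h3 : -(ε * (2 * w i)) ≤ ε * (2 * |w i|) := by
      have := neg_le_abs (w i)
      nlinarith [hε.le]
    linarith [h1, hsq2]
  rw [hfinal]
  have hsieq : s i = ∑ j, R i j := rfl
  linarith

open ComplexOrder in
lemma rank_conjT_mul {m n : ℕ} (Bm : Matrix (Fin m) (Fin n) ℂ) :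
    (Bmᴴ * Bm).rank = Bm.rank :=
  Matrix.rank_conjTranspose_mul_self Bm

theorem rank_of_design_matrix_no_m {m n q k t : ℕ} (hk : 0 < k)
    (A : Matrix (Fin m) (Fin n) ℂ) (hA : IsDesignMatrix A q k t) :
    (n : ℝ) / (1 + (q : ℝ) * ((q : ℝ) - 1) * (t : ℝ) / (k : ℝ)) ≤ (A.rank : ℝ) ∧
    (n : ℝ) - (n : ℝ) * (t : ℝ) * (q : ℝ) * ((q : ℝ) - 1) / (k : ℝ) ≤ (A.rank : ℝ) := by
  classical
  obtain ⟨hrow, hcol, hint⟩ := hA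
  have hkR : (0:ℝ) < k := by exact_mod_cast hk
  -- the denominator is always at least 1
  have hqq : (0:ℝ) ≤ (q : ℝ) * ((q : ℝ) - 1) := by
    rcases Nat.eq_zero_or_pos q with hq | hq
    · simp [hq]
    · have : (1:ℝ) ≤ (q:ℝ) := by exact_mod_cast hq
      nlinarith
  have hD0 : (0:ℝ) ≤ (q : ℝ) * ((q : ℝ) - 1) * (t : ℝ) / (k : ℝ) := by positivity
  have hden : (0:ℝ) < 1 + (q : ℝ) * ((q : ℝ) - 1) * (t : ℝ) / (k : ℝ) := by linarith
  -- second bound follows from the first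
  suffices hfirst : (n : ℝ) / (1 + (q : ℝ) * ((q : ℝ) - 1) * (t : ℝ) / (k : ℝ)) ≤ (A.rank : ℝ) by
    refine ⟨hfirst, le_trans ?_ hfirst⟩
    set D : ℝ := (q : ℝ) * ((q : ℝ) - 1) * (t : ℝ) / (k : ℝ) with hDdef
    have hD2 : (n : ℝ) * (t : ℝ) * (q : ℝ) * ((q : ℝ) - 1) / (k : ℝ) = (n:ℝ) * D := by
      rw [hDdef]; ring
    rw [hD2, le_div_iff₀ hden]
    nlinarith [mul_nonneg (mul_nonneg (Nat.cast_nonneg (α := ℝ) n) hD0) hD0]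
  -- trivial case n = 0
  rcases Nat.eq_zero_or_pos n with hn | hn
  · subst hn
    simp only [Nat.cast_zero, zero_div]
    positivity
  -- Finset versions of the hypotheses
  set rowF : Fin m → Finset (Fin n) := fun i => Finset.univ.filter (fun j => A i j ≠ 0)
    with hrowF
  set colF : Fin n → Finset (Fin m) := fun j => Finset.univ.filter (fun i => A i j ≠ 0)
    with hcolF
  have hrowcard : ∀ i, (rowF i).card ≤ q := by
    intro i
    have := hrow i
    rwa [Set.ncard_eq_toFinset_card', Set.toFinset_setOf] at this
  have hcolcard : ∀ j, k ≤ (colF j).card := by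
    intro j
    have := hcol j
    rwa [Set.ncard_eq_toFinset_card', Set.toFinset_setOf] at this
  have hintcard : ∀ j₁ j₂, j₁ ≠ j₂ →
      (Finset.univ.filter (fun i => A i j₁ ≠ 0 ∧ A i j₂ ≠ 0)).card ≤ t := by
    intro j₁ j₂ hne
    have := hint j₁ j₂ hne
    rw [← Set.setOf_and, Set.ncard_eq_toFinset_card', Set.toFinset_setOf] at this
    exact this
  -- q ≥ 1
  have hq1 : 1 ≤ q := by
    have h1 : 0 < (colF ⟨0, hn⟩).card := lt_of_lt_of_le hk (hcolcard _)
    obtain ⟨i, hi⟩ := Finset.card_pos.mp h1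
    have hAi : A i ⟨0, hn⟩ ≠ 0 := (Finset.mem_filter.mp hi).2
    have : (⟨0, hn⟩ : Fin n) ∈ rowF i := Finset.mem_filter.mpr ⟨Finset.mem_univ _, hAi⟩
    calc 1 ≤ (rowF i).card := Finset.card_pos.mpr ⟨_, this⟩
      _ ≤ q := hrowcard i
  have hq1R : (1:ℝ) ≤ (q:ℝ) := by exact_mod_cast hq1
  -- the squared-magnitude matrix and initial fractional assignment
  set P : Fin m → Fin n → ℝ := fun i j => Complex.normSq (A i j) with hP
  have hPnn : ∀ i j, 0 ≤ P i j := fun i j => Complex.normSq_nonneg _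
  have hPzero : ∀ i j, A i j = 0 → P i j = 0 := fun i j h => by
    simp [hP, h]
  set R : Fin m → Fin n → ℝ := fun i j => if A i j ≠ 0 then ((colF j).card : ℝ)⁻¹ else 0
    with hR
  have hcolpos : ∀ j, (0:ℝ) < ((colF j).card : ℝ) := by
    intro j
    have := lt_of_lt_of_le hk (hcolcard j)
    exact_mod_cast this
  have hR0 : ∀ i j, 0 ≤ R i j := by
    intro i j
    rw [hR]
    dsimp only
    split
    · exact inv_nonneg.mpr (hcolpos j).le
    · exact le_refl _
  have hRP : ∀ i j, R i j ≠ 0 → 0 < P i j := by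
    intro i j hne
    rw [hR] at hne
    dsimp only at hne
    by_cases h : A i j = 0
    · simp [h] at hne
    · exact Complex.normSq_pos.mpr h
  have hRcol : ∀ j, ∑ i, R i j = 1 := by
    intro j
    rw [hR]
    dsimp only
    rw [Finset.sum_ite, Finset.sum_const, Finset.sum_const, smul_zero, add_zero,
      nsmul_eq_mul]
    rw [show Finset.univ.filter (fun i => ¬ A i j = 0) = colF j from rfl]
    exact mul_inv_cancel₀ (hcolpos j).ne'
  have hsle : ∀ i, ∑ j, R i j ≤ (q:ℝ)/(k:ℝ) := by
    intro i
    have h1 : ∑ j, R i j = ∑ j ∈ rowF i, ((colF j).card : ℝ)⁻¹ := by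
      rw [Finset.sum_filter]
    rw [h1]
    calc ∑ j ∈ rowF i, ((colF j).card : ℝ)⁻¹ ≤ ∑ j ∈ rowF i, (k:ℝ)⁻¹ := by
          refine Finset.sum_le_sum fun j _ => ?_
          exact inv_anti₀ hkR (by exact_mod_cast hcolcard j)
      _ = ((rowF i).card : ℝ) * (k:ℝ)⁻¹ := by rw [Finset.sum_const, nsmul_eq_mul]
      _ ≤ (q:ℝ) * (k:ℝ)⁻¹ := by
          have : ((rowF i).card : ℝ) ≤ (q:ℝ) := by exact_mod_cast hrowcard i
          exact mul_le_mul_of_nonneg_right this (inv_nonneg.mpr hkR.le)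
      _ = (q:ℝ)/(k:ℝ) := by rw [div_eq_mul_inv]
  -- key spectral inequality, for every δ > 0
  have key : ∀ δ : ℝ, 0 < δ → (n:ℝ)^2
      ≤ (A.rank : ℝ) * ((n:ℝ) + (n:ℝ) * ((t:ℝ) * (((q:ℝ) - 1) * ((q:ℝ)/(k:ℝ) + δ)))) := by
    intro δ hδ
    obtain ⟨u, hu⟩ := scaling_lemma P R hPnn hR0 hRP hRcol hδ
    set cs : Fin n → ℝ := fun j => ∑ i', Real.exp (u i') * P i' j with hcs
    have hcspos : ∀ j, 0 < cs j := by
      intro j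
      obtain ⟨i, -, hi⟩ := Finset.exists_ne_zero_of_sum_ne_zero
        (by rw [hRcol j]; norm_num : (∑ i, R i j) ≠ 0)
      exact Finset.sum_pos' (fun i' _ => mul_nonneg (Real.exp_pos _).le (hPnn i' j))
        ⟨i, Finset.mem_univ i, mul_pos (Real.exp_pos _) (hRP i j hi)⟩
    set wt : Fin m → Fin n → ℝ := fun i j => Real.exp (u i) * P i j / cs j with hwt
    have hwt0 : ∀ i j, 0 ≤ wt i j := fun i j =>
      div_nonneg (mul_nonneg (Real.exp_pos _).le (hPnn i j)) (hcspos j).le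
    have hwtcol : ∀ j, ∑ i, wt i j = 1 := by
      intro j
      rw [hwt]
      dsimp only
      rw [← Finset.sum_div]
      exact div_self (hcspos j).ne'
    have hwtrow : ∀ i, ∑ j, wt i j ≤ (q:ℝ)/(k:ℝ) + δ :=
      fun i => (hu i).trans (by linarith [hsle i])
    have hwtzero : ∀ i j, A i j = 0 → wt i j = 0 := by
      intro i j h
      rw [hwt]
      dsimp only
      rw [hPzero i j h, mul_zero, zero_div]
    have hqkδ : (0:ℝ) ≤ (q:ℝ)/(k:ℝ) + δ := by positivity
    have hwtle : ∀ i j, wt i j ≤ (q:ℝ)/(k:ℝ) + δ := by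
      intro i j
      refine le_trans ?_ (hwtrow i)
      exact Finset.single_le_sum (fun j' _ => hwt0 i j') (Finset.mem_univ j)
    -- the scaled matrix
    set d1 : Fin m → ℂ := fun i => ((Real.sqrt (Real.exp (u i)) : ℝ) : ℂ) with hd1
    set d2 : Fin n → ℂ := fun j => (((Real.sqrt (cs j))⁻¹ : ℝ) : ℂ) with hd2
    set Bm : Matrix (Fin m) (Fin n) ℂ := Matrix.diagonal d1 * A * Matrix.diagonal d2 with hBm
    have hdet1 : IsUnit (Matrix.diagonal d1).det := by
      rw [Matrix.det_diagonal]
      refine isUnit_iff_ne_zero.mpr (Finset.prod_ne_zero_iff.mpr fun i _ => ?_)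
      rw [hd1]
      dsimp only
      exact_mod_cast (Real.sqrt_pos.mpr (Real.exp_pos _)).ne'
    have hdet2 : IsUnit (Matrix.diagonal d2).det := by
      rw [Matrix.det_diagonal]
      refine isUnit_iff_ne_zero.mpr (Finset.prod_ne_zero_iff.mpr fun j _ => ?_)
      rw [hd2]
      dsimp only
      exact_mod_cast (inv_pos.mpr (Real.sqrt_pos.mpr (hcspos j))).ne'
    have hrank : Bm.rank = A.rank := by
      rw [hBm, Matrix.rank_mul_eq_left_of_isUnit_det _ _ hdet2,
        Matrix.rank_mul_eq_right_of_isUnit_det _ _ hdet1]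
    have hBmentry : ∀ i j, Bm i j = d1 i * A i j * d2 j := by
      intro i j
      rw [hBm, Matrix.mul_diagonal, Matrix.diagonal_mul]
    have hBmsq : ∀ i j, Complex.normSq (Bm i j) = wt i j := by
      intro i j
      rw [hBmentry, _root_.map_mul, _root_.map_mul, hd1, hd2]
      dsimp only
      rw [Complex.normSq_ofReal, Complex.normSq_ofReal,
        Real.mul_self_sqrt (Real.exp_pos (u i)).le, ← mul_inv,
        Real.mul_self_sqrt (hcspos j).le]
      rw [hwt]
      dsimp only
      rw [div_eq_mul_inv]
    set N : Matrix (Fin n) (Fin n) ℂ := Bmᴴ * Bm with hNdef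
    have hNH : N.IsHermitian := Matrix.isHermitian_conjTranspose_mul_self Bm
    have hNapp : ∀ j j', N j j' = ∑ i, star (Bm i j) * Bm i j' := by
      intro j j'
      rw [hNdef, Matrix.mul_apply]
      exact Finset.sum_congr rfl fun i _ => by rw [Matrix.conjTranspose_apply]
    have hterm : ∀ i j, star (Bm i j) * Bm i j = ((wt i j : ℝ) : ℂ) := by
      intro i j
      rw [← hBmsq i j, Complex.star_def, mul_comm, Complex.mul_conj]
    have hNdiag : ∀ j, N j j = 1 := by
      intro j
      rw [hNapp, Finset.sum_congr rfl (fun i _ => hterm i j)]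
      exact_mod_cast congrArg Complex.ofReal (hwtcol j)
    have htr : ∑ i, hNH.eigenvalues i = (n:ℝ) := by
      have h1 := herm_trace_eq N hNH
      have h2 : N.trace = (n:ℂ) := by
        rw [Matrix.trace]
        have : ∀ j, N.diag j = 1 := fun j => hNdiag j
        rw [Finset.sum_congr rfl (fun j _ => this j), Finset.sum_const, Finset.card_univ,
          Fintype.card_fin, nsmul_eq_mul, mul_one]
      rw [h2] at h1
      exact_mod_cast h1.symm
    have hfro : ∑ i, (hNH.eigenvalues i)^2 = ∑ j, ∑ j', Complex.normSq (N j j') := by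
      have h1 := herm_sq_trace_eq N hNH
      have h2 : (N * N).trace = ((∑ j, ∑ j', Complex.normSq (N j j') : ℝ) : ℂ) := by
        rw [Matrix.trace]
        push_cast
        refine Finset.sum_congr rfl fun j _ => ?_
        have hdiagNN : (N * N).diag j = ∑ j', N j j' * N j' j := Matrix.mul_apply
        rw [hdiagNN]
        refine Finset.sum_congr rfl fun j' _ => ?_
        have hsym : N j' j = star (N j j') := by
          conv_lhs => rw [← hNH]
          rw [Matrix.conjTranspose_apply]
        rw [hsym, Complex.star_def, Complex.mul_conj]
      rw [h2] at h1
      exact_mod_cast h1.symm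
    have hoff : ∀ j j', j ≠ j' →
        Complex.normSq (N j j')
          ≤ (∑ i ∈ Finset.univ.filter (fun i => A i j ≠ 0 ∧ A i j' ≠ 0), wt i j)
            * ((t:ℝ) * ((q:ℝ)/(k:ℝ) + δ)) := by
      intro j j' hne
      set T := Finset.univ.filter (fun i => A i j ≠ 0 ∧ A i j' ≠ 0) with hT
      have habs : ‖N j j'‖ ≤ ∑ i ∈ T, Real.sqrt (wt i j) * Real.sqrt (wt i j') := by
        rw [hNapp]
        have hzero : ∀ i ∈ Finset.univ, i ∉ T → star (Bm i j) * Bm i j' = 0 := by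
          intro i _ hiT
          rw [hT] at hiT
          simp only [Finset.mem_filter, Finset.mem_univ, true_and, not_and_or, not_not] at hiT
          rcases hiT with h | h
          · have hB0 : Bm i j = 0 := by rw [hBmentry, h, mul_zero, zero_mul]
            rw [hB0, star_zero, zero_mul]
          · have hB0 : Bm i j' = 0 := by rw [hBmentry, h, mul_zero, zero_mul]
            rw [hB0, mul_zero]
        rw [← Finset.sum_subset (Finset.subset_univ T) hzero]
        refine le_trans (norm_sum_le _ _) (Finset.sum_le_sum fun i hi => ?_)
        rw [norm_mul]
        have h1 : ‖star (Bm i j)‖ = Real.sqrt (wt i j) := by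
          rw [Complex.star_def, Complex.norm_conj, Complex.norm_def, hBmsq]
        have h2 : ‖Bm i j'‖ = Real.sqrt (wt i j') := by
          rw [Complex.norm_def, hBmsq]
        rw [h1, h2]
      have h2 : (∑ i ∈ T, Real.sqrt (wt i j) * Real.sqrt (wt i j'))^2
          ≤ (∑ i ∈ T, wt i j) * (∑ i ∈ T, wt i j') := by
        have hcs2 := Finset.sum_mul_sq_le_sq_mul_sq T
          (fun i => Real.sqrt (wt i j)) (fun i => Real.sqrt (wt i j'))
        have e1 : ∑ i ∈ T, (Real.sqrt (wt i j))^2 = ∑ i ∈ T, wt i j :=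
          Finset.sum_congr rfl fun i _ => Real.sq_sqrt (hwt0 i j)
        have e2 : ∑ i ∈ T, (Real.sqrt (wt i j'))^2 = ∑ i ∈ T, wt i j' :=
          Finset.sum_congr rfl fun i _ => Real.sq_sqrt (hwt0 i j')
        rw [e1, e2] at hcs2
        exact hcs2
      have h3 : ∑ i ∈ T, wt i j' ≤ (t:ℝ) * ((q:ℝ)/(k:ℝ) + δ) := by
        have hcardT : (T.card : ℝ) ≤ (t:ℝ) := by exact_mod_cast hintcard j j' hne
        calc ∑ i ∈ T, wt i j' ≤ ∑ _i ∈ T, ((q:ℝ)/(k:ℝ) + δ) :=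
              Finset.sum_le_sum fun i _ => hwtle i j'
          _ = (T.card : ℝ) * ((q:ℝ)/(k:ℝ) + δ) := by rw [Finset.sum_const, nsmul_eq_mul]
          _ ≤ (t:ℝ) * ((q:ℝ)/(k:ℝ) + δ) := mul_le_mul_of_nonneg_right hcardT hqkδ
      calc Complex.normSq (N j j') = ‖N j j'‖^2 := (Complex.sq_norm _).symm
        _ ≤ (∑ i ∈ T, Real.sqrt (wt i j) * Real.sqrt (wt i j'))^2 :=
            pow_le_pow_left₀ (norm_nonneg _) habs 2
        _ ≤ (∑ i ∈ T, wt i j) * (∑ i ∈ T, wt i j') := h2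
        _ ≤ (∑ i ∈ T, wt i j) * ((t:ℝ) * ((q:ℝ)/(k:ℝ) + δ)) :=
            mul_le_mul_of_nonneg_left h3 (Finset.sum_nonneg fun i _ => hwt0 i j)
    have hrowsum : ∀ j, ∑ j' ∈ Finset.univ.erase j,
        (∑ i ∈ Finset.univ.filter (fun i => A i j ≠ 0 ∧ A i j' ≠ 0), wt i j) ≤ (q:ℝ) - 1 := by
      intro j
      have hstep : ∀ j', (∑ i ∈ Finset.univ.filter (fun i => A i j ≠ 0 ∧ A i j' ≠ 0), wt i j)
          ≤ ∑ i, (if A i j' ≠ 0 then wt i j else 0) := by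
        intro j'
        rw [← Finset.sum_filter]
        refine Finset.sum_le_sum_of_subset_of_nonneg ?_ (fun i _ _ => hwt0 i j)
        intro i hi
        simp only [Finset.mem_filter, Finset.mem_univ, true_and] at hi ⊢
        exact hi.2
      calc ∑ j' ∈ Finset.univ.erase j,
            (∑ i ∈ Finset.univ.filter (fun i => A i j ≠ 0 ∧ A i j' ≠ 0), wt i j)
          ≤ ∑ j' ∈ Finset.univ.erase j, ∑ i, (if A i j' ≠ 0 then wt i j else 0) :=
            Finset.sum_le_sum fun j' _ => hstep j'
        _ = ∑ i, ∑ j' ∈ Finset.univ.erase j, (if A i j' ≠ 0 then wt i j else 0) :=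
            Finset.sum_comm
        _ = ∑ i,.((((Finset.univ.erase j).filter (fun j' => A i j' ≠ 0)).card : ℝ)) * wt i j := by
            refine Finset.sum_congr rfl fun i _ => ?_
            rw [← Finset.sum_filter, Finset.sum_const, nsmul_eq_mul]
        _ ≤ ∑ i, ((q:ℝ) - 1) * wt i j := by
            refine Finset.sum_le_sum fun i _ => ?_
            by_cases hij : A i j = 0
            · rw [hwtzero i j hij, mul_zero, mul_zero]
            · have hjmem : j ∈ rowF i := by
                rw [hrowF]
                exact Finset.mem_filter.mpr ⟨Finset.mem_univ _, hij⟩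
              have hsub : (Finset.univ.erase j).filter (fun j' => A i j' ≠ 0)
                  ⊆ (rowF i).erase j := by
                intro j' hj'
                simp only [Finset.mem_filter, Finset.mem_erase, Finset.mem_univ, true_and] at hj'
                exact Finset.mem_erase.mpr ⟨hj'.1.1,
                  Finset.mem_filter.mpr ⟨Finset.mem_univ _, hj'.2⟩⟩
              have hcard1 : ((Finset.univ.erase j).filter (fun j' => A i j' ≠ 0)).card
                  ≤ q - 1 := by
                calc ((Finset.univ.erase j).filter (fun j' => A i j' ≠ 0)).card
                    ≤ ((rowF i).erase j).card := Finset.card_le_card hsub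
                  _ = (rowF i).card - 1 := Finset.card_erase_of_mem hjmem
                  _ ≤ q - 1 := Nat.sub_le_sub_right (hrowcard i) 1
              have hcardR : ((((Finset.univ.erase j).filter (fun j' => A i j' ≠ 0)).card : ℝ))
                  ≤ (q:ℝ) - 1 := by
                have := (Nat.cast_le (α := ℝ)).mpr hcard1
                rwa [Nat.cast_sub hq1, Nat.cast_one] at this
              exact mul_le_mul_of_nonneg_right hcardR (hwt0 i j)
        _ = ((q:ℝ) - 1) * ∑ i, wt i j := by rw [← Finset.mul_sum]
        _ = (q:ℝ) - 1 := by rw [hwtcol j, mul_one]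
    have htqk : (0:ℝ) ≤ (t:ℝ) * ((q:ℝ)/(k:ℝ) + δ) := by positivity
    have htotal : ∑ j, ∑ j', Complex.normSq (N j j')
        ≤ (n:ℝ) + (n:ℝ) * ((t:ℝ) * (((q:ℝ) - 1) * ((q:ℝ)/(k:ℝ) + δ))) := by
      have hperj : ∀ j, ∑ j', Complex.normSq (N j j')
          ≤ 1 + (t:ℝ) * (((q:ℝ) - 1) * ((q:ℝ)/(k:ℝ) + δ)) := by
        intro j
        rw [← Finset.add_sum_erase Finset.univ _ (Finset.mem_univ j)]
        have hdiagterm : Complex.normSq (N j j) = 1 := by rw [hNdiag]; simp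
        refine add_le_add (le_of_eq hdiagterm) ?_
        calc ∑ j' ∈ Finset.univ.erase j, Complex.normSq (N j j')
            ≤ ∑ j' ∈ Finset.univ.erase j,
              (∑ i ∈ Finset.univ.filter (fun i => A i j ≠ 0 ∧ A i j' ≠ 0), wt i j)
                * ((t:ℝ) * ((q:ℝ)/(k:ℝ) + δ)) := by
              refine Finset.sum_le_sum fun j' hj' => ?_
              exact hoff j j' (Ne.symm (Finset.mem_erase.mp hj').1)
          _ = (∑ j' ∈ Finset.univ.erase j,
              (∑ i ∈ Finset.univ.filter (fun i => A i j ≠ 0 ∧ A i j' ≠ 0), wt i j))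
                * ((t:ℝ) * ((q:ℝ)/(k:ℝ) + δ)) := by rw [← Finset.sum_mul]
          _ ≤ ((q:ℝ) - 1) * ((t:ℝ) * ((q:ℝ)/(k:ℝ) + δ)) :=
              mul_le_mul_of_nonneg_right (hrowsum j) htqk
          _ = (t:ℝ) * (((q:ℝ) - 1) * ((q:ℝ)/(k:ℝ) + δ)) := by ring
      calc ∑ j, ∑ j', Complex.normSq (N j j')
          ≤ ∑ _j : Fin n, (1 + (t:ℝ) * (((q:ℝ) - 1) * ((q:ℝ)/(k:ℝ) + δ))) :=
            Finset.sum_le_sum fun j _ => hperj j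
        _ = (n:ℝ) * (1 + (t:ℝ) * (((q:ℝ) - 1) * ((q:ℝ)/(k:ℝ) + δ))) := by
            rw [Finset.sum_const, Finset.card_univ, Fintype.card_fin, nsmul_eq_mul]
        _ = (n:ℝ) + (n:ℝ) * ((t:ℝ) * (((q:ℝ) - 1) * ((q:ℝ)/(k:ℝ) + δ))) := by ring
    have hRL := rank_lemma_eigs N hNH
    rw [htr] at hRL
    have hrankN : N.rank = A.rank := by
      rw [hNdef, rank_conjT_mul, hrank]
    rw [hrankN] at hRL
    calc (n:ℝ)^2 ≤ (A.rank:ℝ) * ∑ i, (hNH.eigenvalues i)^2 := hRL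
      _ = (A.rank:ℝ) * (∑ j, ∑ j', Complex.normSq (N j j')) := by rw [hfro]
      _ ≤ (A.rank:ℝ) * ((n:ℝ) + (n:ℝ) * ((t:ℝ) * (((q:ℝ) - 1) * ((q:ℝ)/(k:ℝ) + δ)))) :=
          mul_le_mul_of_nonneg_left htotal (Nat.cast_nonneg _)
  -- take δ → 0
  have hmain : (n:ℝ)^2
      ≤ (A.rank:ℝ) * ((n:ℝ) + (n:ℝ) * ((t:ℝ) * (((q:ℝ) - 1) * ((q:ℝ)/(k:ℝ))))) := by
    apply le_of_forall_pos_le_add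
    intro ε hε
    set C : ℝ := (A.rank:ℝ) * ((n:ℝ) * ((t:ℝ) * ((q:ℝ) - 1))) with hC
    have hC0 : (0:ℝ) ≤ C := by
      refine mul_nonneg (Nat.cast_nonneg _) (mul_nonneg (Nat.cast_nonneg _)
        (mul_nonneg (Nat.cast_nonneg _) (by linarith)))
    have hδpos : 0 < ε / (C + 1) := div_pos hε (by linarith)
    have h1 := key (ε / (C + 1)) hδpos
    have h2 : (A.rank:ℝ) * ((n:ℝ) + (n:ℝ) * ((t:ℝ) * (((q:ℝ) - 1) * ((q:ℝ)/(k:ℝ) + ε/(C+1)))))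
        = (A.rank:ℝ) * ((n:ℝ) + (n:ℝ) * ((t:ℝ) * (((q:ℝ) - 1) * ((q:ℝ)/(k:ℝ)))))
          + C * (ε/(C+1)) := by
      rw [hC]; ring
    have h3 : C * (ε/(C+1)) ≤ ε := by
      have h4 : C * (ε/(C+1)) ≤ (C+1) * (ε/(C+1)) :=
        mul_le_mul_of_nonneg_right (by linarith) hδpos.le
      have h5 : (C+1) * (ε/(C+1)) = ε := by
        rw [mul_comm, div_mul_cancel₀]
        linarith
      linarith
    rw [h2] at h1
    linarith
  rw [div_le_iff₀ hden]
  have hrw : (A.rank:ℝ) * ((n:ℝ) + (n:ℝ) * ((t:ℝ) * (((q:ℝ) - 1) * ((q:ℝ)/(k:ℝ)))))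
      = ((A.rank:ℝ) * (1 + (q:ℝ) * ((q:ℝ) - 1) * (t:ℝ) / (k:ℝ))) * (n:ℝ) := by ring
  have hnpos : (0:ℝ) < (n:ℝ) := by exact_mod_cast hn
  rw [hrw, pow_two] at hmain
  exact le_of_mul_le_mul_right hmain hnpos
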